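/- Let n ≥ 2, let p_1, …, p_n be integers with each p_i ≥ 2, and let q ≥ 1 be an integer. Let G be the square integer matrix of size V = 1 + Σ_i (p_i - 1) + 1 defined as the weighted adjacency matrix of the following star-shaped graph: a central vertex v_0 of weight -n; for each i, a chain of p_i - 1 vertices of weight -2, with v_0 adjacent to the first vertex of the chain and consecutive chain vertices adjacent; and one further vertex u of weight -q adjacent to v_0 (diagonal entries of G are the weights, the off-diagonal entry for a pair of vertices is 1 if they are adjacent and 0 otherwise). If there exist a natural number N and an integer matrix B : Matrix (Fin N) (Fin V) ℤ such that Bᵀ * B = -G and the ℤ-linear map ℤ^N → ℤ^V, x ↦ Bᵀ.mulVec x, is surjective, then q > min{p_1, …, p_n}. -/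

import Mathlib

/-- Vertex set of the star-shaped plumbing graph for the pretzel link
`P(p_1,…,p_n,-q)`: the central vertex, the chain vertices (for each `i`, a chain
of `p_i - 1` vertices), and the extra vertex `u` of weight `-q`. -/
def PretzelVertex (n : ℕ) (p : Fin n → ℕ) : Type :=
  Unit ⊕ ((i : Fin n) × Fin (p i - 1)) ⊕ Unit

/-- The weighted adjacency matrix of the star-shaped graph: the central vertex has
weight `-n` and is adjacent to the first vertex of each chain and to `u`;
consecutive chain vertices are adjacent and have weight `-2`; `u` has weight `-q`. -/
def pretzelMatrix (n : ℕ) (p : Fin n → ℕ) (q : ℕ) :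
    Matrix (PretzelVertex n p) (PretzelVertex n p) ℤ :=
  fun a b =>
    match a, b with
    | Sum.inl _, Sum.inl _ => -(n : ℤ)
    | Sum.inl _, Sum.inr (Sum.inl ⟨_, j⟩) => if (j : ℕ) = 0 then 1 else 0
    | Sum.inr (Sum.inl ⟨_, j⟩), Sum.inl _ => if (j : ℕ) = 0 then 1 else 0
    | Sum.inl _, Sum.inr (Sum.inr _) => 1
    | Sum.inr (Sum.inr _), Sum.inl _ => 1
    | Sum.inr (Sum.inl ⟨i, j⟩), Sum.inr (Sum.inl ⟨i', j'⟩) =>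
        if (i : ℕ) = (i' : ℕ) then
          (if (j : ℕ) = (j' : ℕ) then -2
           else if (j : ℕ) + 1 = (j' : ℕ) ∨ (j' : ℕ) + 1 = (j : ℕ) then 1 else 0)
        else 0
    | Sum.inr (Sum.inl _), Sum.inr (Sum.inr _) => 0
    | Sum.inr (Sum.inr _), Sum.inr (Sum.inl _) => 0
    | Sum.inr (Sum.inr _), Sum.inr (Sum.inr _) => -(q : ℤ)

open Matrix

namespace StmtAux

variable {N : ℕ}




lemma sq_one_cases {z : ℤ} (h : z ^ 2 = 1) : z = 1 ∨ z = -1 := by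
  have h' : z * z = 1 := by nlinarith
  exact Int.isUnit_iff.mp (IsUnit.of_mul_eq_one (a := z) z h')

lemma int_sq_ne_two (z : ℤ) : z ^ 2 ≠ 2 := by
  intro h
  rcases (by omega : z ≤ -2 ∨ z = -1 ∨ z = 0 ∨ z = 1 ∨ 2 ≤ z) with h'|h'|h'|h'|h' <;>
    first
    | (subst h'; norm_num at h)
    | nlinarith

lemma dot_as_sq (x : Fin N → ℤ) : x ⬝ᵥ x = ∑ k, x k ^ 2 := by
  simp [dotProduct, sq]

lemma norm_two {x : Fin N → ℤ} (h : x ⬝ᵥ x = 2) :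
    ∃ a b : Fin N, a ≠ b ∧ x a ^ 2 = 1 ∧ x b ^ 2 = 1 ∧ ∀ w, w ≠ a → w ≠ b → x w = 0 := by
  classical
  have hsum : ∑ k, x k ^ 2 = 2 := by rw [← dot_as_sq, h]
  have hne : ∃ a, x a ≠ 0 := by
    by_contra h0
    push_neg at h0
    simp [h0] at hsum
  obtain ⟨a, ha⟩ := hne
  have ha2 : 1 ≤ x a ^ 2 := by rcases ha.lt_or_gt with h'|h' <;> nlinarith
  have hsplit : x a ^ 2 + ∑ k ∈ Finset.univ.erase a, x k ^ 2 = 2 := by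
    rw [Finset.add_sum_erase Finset.univ (fun k => x k ^ 2) (Finset.mem_univ a)]; exact hsum
  have hb : ∃ b ∈ Finset.univ.erase a, x b ≠ 0 := by
    by_contra h0
    push_neg at h0
    have : ∑ k ∈ Finset.univ.erase a, x k ^ 2 = 0 :=
      Finset.sum_eq_zero fun k hk => by rw [h0 k hk]; ring
    rw [this, add_zero] at hsplit
    exact int_sq_ne_two _ hsplit
  obtain ⟨b, hbmem, hb0⟩ := hb
  have hab : a ≠ b := fun hh => (Finset.mem_erase.mp hbmem).1 hh.symm
  have hb2 : 1 ≤ x b ^ 2 := by rcases hb0.lt_or_gt with h'|h' <;> nlinarith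
  have hsplit2 : x a ^ 2 + (x b ^ 2 + ∑ k ∈ (Finset.univ.erase a).erase b, x k ^ 2) = 2 := by
    rw [Finset.add_sum_erase _ (fun k => x k ^ 2) hbmem]; exact hsplit
  have hrest : 0 ≤ ∑ k ∈ (Finset.univ.erase a).erase b, x k ^ 2 :=
    Finset.sum_nonneg fun i _ => sq_nonneg _
  have hx1 : x a ^ 2 = 1 := by omega
  have hx2 : x b ^ 2 = 1 := by omega
  have hzero : ∑ k ∈ (Finset.univ.erase a).erase b, x k ^ 2 = 0 := by omega
  refine ⟨a, b, hab, hx1, hx2, fun w hwa hwb => ?_⟩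
  have hwmem : w ∈ (Finset.univ.erase a).erase b := by
    simp [Finset.mem_erase, hwa, hwb]
  have := (Finset.sum_eq_zero_iff_of_nonneg fun i _ => sq_nonneg (x i)).mp hzero w hwmem
  exact pow_eq_zero_iff (n := 2) (by norm_num) |>.mp this

lemma dot_support {x : Fin N → ℤ} (y : Fin N → ℤ) {a b : Fin N} (hab : a ≠ b)
    (hs : ∀ w, w ≠ a → w ≠ b → x w = 0) : x ⬝ᵥ y = x a * y a + x b * y b := by
  classical
  have h1 : x ⬝ᵥ y = ∑ k ∈ ({a, b} : Finset (Fin N)), x k * y k := by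
    rw [dotProduct]
    refine (Finset.sum_subset (Finset.subset_univ _) ?_).symm
    intro k _ hk
    simp only [Finset.mem_insert, Finset.mem_singleton, not_or] at hk
    rw [hs k hk.1 hk.2, zero_mul]
  rw [h1, Finset.sum_pair hab]


variable {N : ℕ}


lemma yval_aux {y : Fin N → ℤ} (hy : y ⬝ᵥ y = 2) : ∀ w, y w = 0 ∨ y w ^ 2 = 1 := by
  obtain ⟨a', b', hab', hya', hyb', hys⟩ := norm_two hy
  intro w
  by_cases h1 : w = a'
  · right; rw [h1]; exact hya'
  by_cases h2 : w = b'
  · right; rw [h2]; exact hyb'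
  · left; exact hys w h1 h2

lemma pair_one {x y : Fin N → ℤ} (hx : x ⬝ᵥ x = 2) (hy : y ⬝ᵥ y = 2) (hxy : x ⬝ᵥ y = 1) :
    ∃ a, x a = y a ∧ x a ^ 2 = 1 ∧ ∀ w, w ≠ a → x w * y w = 0 := by
  classical
  obtain ⟨a, b, hab, hxa, hxb, hxs⟩ := norm_two hx
  have hyval := yval_aux hy
  have hdot : x a * y a + x b * y b = 1 := by rw [← dot_support y hab hxs]; exact hxy
  have hta : (x a * y a) ^ 2 ≤ 1 := by
    rcases hyval a with h|h
    · simp [h]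
    · nlinarith
  have htb : (x b * y b) ^ 2 ≤ 1 := by
    rcases hyval b with h|h
    · simp [h]
    · nlinarith
  set ta := x a * y a with hta'
  set tb := x b * y b with htb'
  have hba : -1 ≤ ta ∧ ta ≤ 1 := by constructor <;> nlinarith
  have hbb : -1 ≤ tb ∧ tb ≤ 1 := by constructor <;> nlinarith
  have hcases : (ta = 1 ∧ tb = 0) ∨ (ta = 0 ∧ tb = 1) := by omega
  rcases hcases with ⟨h1, h2⟩ | ⟨h1, h2⟩
  · refine ⟨a, ?_, hxa, ?_⟩
    · rcases sq_one_cases hxa with h|h <;> rw [h] at hta' ⊢ <;> omega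
    · intro w hw
      by_cases hwb : w = b
      · rw [hwb]; exact h2
      · rw [hxs w hw hwb, zero_mul]
  · refine ⟨b, ?_, hxb, ?_⟩
    · rcases sq_one_cases hxb with h|h <;> rw [h] at htb' ⊢ <;> omega
    · intro w hw
      by_cases hwa : w = a
      · rw [hwa]; exact h1
      · rw [hxs w hwa hw, zero_mul]

lemma pair_zero {x y : Fin N → ℤ} (hx : x ⬝ᵥ x = 2) (hy : y ⬝ᵥ y = 2) (hxy : x ⬝ᵥ y = 0)
    (hv : ∃ v, x ⬝ᵥ v = 1 ∧ y ⬝ᵥ v = 0) : ∀ w, x w * y w = 0 := by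
  classical
  obtain ⟨a, b, hab, hxa, hxb, hxs⟩ := norm_two hx
  obtain ⟨a', b', hab', hya', hyb', hys⟩ := norm_two hy
  have hyval := yval_aux hy
  have hdot : x a * y a + x b * y b = 0 := by rw [← dot_support y hab hxs]; exact hxy
  have aux : ∀ c d : Fin N, c ≠ d →
      (∀ w, w ≠ c → w ≠ d → x w = 0) → x c ^ 2 = 1 → x d ^ 2 = 1 →
      x c * y c = 1 → x d * y d = -1 → False := by
    intro c d hcd hsupp hxc hxd h1 h2
    have hyc : y c = x c := by
      rcases sq_one_cases hxc with h|h <;> rw [h] at h1 ⊢ <;> omega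
    have hyd : y d = -x d := by
      rcases sq_one_cases hxd with h|h <;> rw [h] at h2 ⊢ <;> omega
    have hyne : y c ≠ 0 := by intro h0; rw [h0, mul_zero] at h1; simp at h1
    have hynd : y d ≠ 0 := by intro h0; rw [h0, mul_zero] at h2; simp at h2
    have hmemc : c = a' ∨ c = b' := by
      by_contra h0; push_neg at h0; exact hyne (hys c h0.1 h0.2)
    have hmemd : d = a' ∨ d = b' := by
      by_contra h0; push_neg at h0; exact hynd (hys d h0.1 h0.2)
    have hysupp : ∀ w, w ≠ c → w ≠ d → y w = 0 := by
      intro w h1' h2'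
      rcases hmemc with hc|hc <;> rcases hmemd with hd|hd
      · exact absurd (hc.trans hd.symm) hcd
      · exact hys w (hc ▸ h1') (hd ▸ h2')
      · exact hys w (hd ▸ h2') (hc ▸ h1')
      · exact absurd (hc.trans hd.symm) hcd
    obtain ⟨v, hv1, hv2⟩ := hv
    have e1 : x c * v c + x d * v d = 1 := by rw [← dot_support v hcd hsupp]; exact hv1
    have e2 : y c * v c + y d * v d = 0 := by rw [← dot_support v hcd hysupp]; exact hv2
    rw [hyc, hyd] at e2
    have e3 : x c * v c - x d * v d = 0 := by linarith [e2]
    set r := x c * v c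
    set t := x d * v d
    omega
  have hta : (x a * y a) ^ 2 ≤ 1 := by
    rcases hyval a with h|h
    · simp [h]
    · nlinarith
  have htb : (x b * y b) ^ 2 ≤ 1 := by
    rcases hyval b with h|h
    · simp [h]
    · nlinarith
  have hba : -1 ≤ x a * y a ∧ x a * y a ≤ 1 := by constructor <;> nlinarith
  have hbb : -1 ≤ x b * y b ∧ x b * y b ≤ 1 := by constructor <;> nlinarith
  have hcases : (x a * y a = 0 ∧ x b * y b = 0) ∨ (x a * y a = 1 ∧ x b * y b = -1)
      ∨ (x a * y a = -1 ∧ x b * y b = 1) := by omega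
  rcases hcases with ⟨h1, h2⟩ | ⟨h1, h2⟩ | ⟨h1, h2⟩
  · intro w
    by_cases hwa : w = a
    · rw [hwa]; exact h1
    by_cases hwb : w = b
    · rw [hwb]; exact h2
    · rw [hxs w hwa hwb, zero_mul]
  · exact absurd (aux a b hab hxs hxa hxb h1 h2) not_false
  · exact absurd (aux b a hab.symm (fun w h1' h2' => hxs w h2' h1') hxb hxa h2 h1) not_false


variable {N : ℕ}

lemma sq_one_ne_zero {z : ℤ} (h : z ^ 2 = 1) : z ≠ 0 := by
  intro h0; rw [h0] at h; norm_num at h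

lemma other_point {x : Fin N → ℤ} (hx : x ⬝ᵥ x = 2) {A : Fin N} (hA : x A ≠ 0) :
    ∃ d, d ≠ A ∧ (x d) ^ 2 = 1 ∧ (x A) ^ 2 = 1 ∧ ∀ w, w ≠ A → w ≠ d → x w = 0 := by
  obtain ⟨a, b, hab, ha, hb, hs⟩ := norm_two hx
  have hmem : A = a ∨ A = b := by
    by_contra h; push_neg at h; exact hA (hs A h.1 h.2)
  rcases hmem with rfl | rfl
  · exact ⟨b, fun h => hab h.symm, hb, ha, fun w h1 h2 => hs w h1 h2⟩
  · exact ⟨a, fun h => hab h, ha, hb, fun w h1 h2 => hs w h2 h1⟩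

lemma hub {L : ℕ} (hL : 1 ≤ L) (z : ℕ → Fin N → ℤ) (v : Fin N → ℤ)
    (h2 : ∀ t < L, z t ⬝ᵥ z t = 2)
    (h1 : ∀ t < L, ∀ s < L, t ≠ s → z t ⬝ᵥ z s = 1)
    (hv : ∀ t < L, z t ⬝ᵥ v = -1) :
    ∃ (A : Fin N) (c : ℕ → Fin N),
      (z 0 A) ^ 2 = 1 ∧
      (∀ t < L, z t A = z 0 A) ∧
      (∀ t < L, c t ≠ A ∧ (z t (c t)) ^ 2 = 1 ∧ (∀ w, w ≠ A → w ≠ c t → z t w = 0)) ∧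
      (∀ t < L, ∀ s < L, t ≠ s → c t ≠ c s) := by
  classical
  have h0L : 0 < L := hL
  rcases eq_or_lt_of_le hL with hL1 | hL2
  · -- L = 1
    obtain ⟨a, b, hab, ha, hb, hs⟩ := norm_two (h2 0 h0L)
    refine ⟨a, fun _ => b, ha, ?_, ?_, ?_⟩
    · intro t ht; have : t = 0 := by omega
      rw [this]
    · intro t ht; have : t = 0 := by omega
      subst this
      exact ⟨fun h => hab h.symm, hb, hs⟩
    · intro t ht s hs' hts
      exfalso; omega
  · -- 1 < L
    have h1L : 1 < L := hL2
    obtain ⟨A, hA01, hA2, hA0s⟩ := pair_one (h2 0 h0L) (h2 1 h1L) (h1 0 h0L 1 h1L (by omega))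
    have hzA0 : z 0 A ≠ 0 := sq_one_ne_zero hA2
    obtain ⟨d0, hd0A, hd0sq, _, hs0⟩ := other_point (h2 0 h0L) hzA0
    have hzA1 : z 1 A ≠ 0 := by rw [← hA01]; exact hzA0
    obtain ⟨d1, hd1A, hd1sq, _, hs1⟩ := other_point (h2 1 h1L) hzA1
    have hzd0 : z 0 d0 ≠ 0 := sq_one_ne_zero hd0sq
    have hzd1 : z 1 d1 ≠ 0 := sq_one_ne_zero hd1sq
    have hd01 : z 1 d0 = 0 := by
      rcases mul_eq_zero.mp (hA0s d0 hd0A) with h | h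
      · exact absurd h hzd0
      · exact h
    have hd0d1 : d0 ≠ d1 := by
      intro h; rw [h] at hd01; exact hzd1 hd01
    have hAd0 : A ≠ d0 := fun h => hd0A h.symm
    have hAd1 : A ≠ d1 := fun h => hd1A h.symm
    have hallA : ∀ t < L, z t A = z 0 A := by
      intro t ht
      rcases Nat.lt_or_ge t 2 with h | h
      · interval_cases t
        · rfl
        · exact hA01.symm
      · obtain ⟨g, hg01, hg2, hgs⟩ := pair_one (h2 0 h0L) (h2 t ht) (h1 0 h0L t ht (by omega))
        by_cases hgA : g = A
        · rw [hgA] at hg01; exact hg01.symm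
        · exfalso
          have hzg : z 0 g ≠ 0 := sq_one_ne_zero hg2
          have hgd0 : g = d0 := by
            by_contra hh; exact hzg (hs0 g hgA hh)
          have hztA : z t A = 0 := by
            rcases mul_eq_zero.mp (hgs A (fun h'' => hgA h''.symm)) with hh | hh
            · exact absurd hh hzA0
            · exact hh
          obtain ⟨f, hf1t, hf2, hfs⟩ := pair_one (h2 1 h1L) (h2 t ht) (h1 1 h1L t ht (by omega))
          have hzf : z 1 f ≠ 0 := sq_one_ne_zero hf2
          have hfA : f ≠ A := by
            intro hh; rw [hh] at hf1t
            rw [hf1t] at hzA1; exact hzA1 hztA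
          have hfd1 : f = d1 := by
            by_contra hh; exact hzf (hs1 f hfA hh)
          have hztd0 : z t d0 = z 0 d0 := by rw [← hgd0]; exact hg01.symm
          have hztd1 : z t d1 = z 1 d1 := by rw [← hfd1]; exact hf1t.symm
          have hsupt : ∀ w, w ≠ d0 → w ≠ d1 → z t w = 0 := by
            obtain ⟨c1, c2, hc12, hc1, hc2, hcs⟩ := norm_two (h2 t ht)
            have hztd0' : z t d0 ≠ 0 := by rw [hztd0]; exact hzd0
            have hztd1' : z t d1 ≠ 0 := by rw [hztd1]; exact hzd1
            have hm0 : d0 = c1 ∨ d0 = c2 := by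
              by_contra hh; push_neg at hh; exact hztd0' (hcs d0 hh.1 hh.2)
            have hm1 : d1 = c1 ∨ d1 = c2 := by
              by_contra hh; push_neg at hh; exact hztd1' (hcs d1 hh.1 hh.2)
            intro w hw0 hw1
            rcases hm0 with hh | hh <;> rcases hm1 with hh' | hh'
            · exact absurd (hh.symm ▸ hh' ▸ rfl : d0 = d1) hd0d1
            · exact hcs w (hh ▸ hw0) (hh' ▸ hw1)
            · exact hcs w (hh' ▸ hw1) (hh ▸ hw0)
            · exact absurd (hh.symm ▸ hh' ▸ rfl : d0 = d1) hd0d1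
          have e0 : z 0 A * v A + z 0 d0 * v d0 = -1 := by
            rw [← dot_support v hAd0 hs0]; exact hv 0 h0L
          have e1 : z 0 A * v A + z 1 d1 * v d1 = -1 := by
            have := dot_support v hAd1 hs1
            rw [← hA01] at this
            rw [← this]; exact hv 1 h1L
          have et : z 0 d0 * v d0 + z 1 d1 * v d1 = -1 := by
            have := dot_support v hd0d1 hsupt
            rw [hztd0, hztd1] at this
            rw [← this]; exact hv t ht
          set P := z 0 A * v A
          set Q := z 0 d0 * v d0
          set R := z 1 d1 * v d1
          omega
    have hctail : ∀ t, ∃ ct, t < L →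
        (ct ≠ A ∧ (z t ct) ^ 2 = 1 ∧ ∀ w, w ≠ A → w ≠ ct → z t w = 0) := by
      intro t
      by_cases ht : t < L
      · have hzA : z t A ≠ 0 := by rw [hallA t ht]; exact hzA0
        obtain ⟨d, hd1', hd2', _, hd4'⟩ := other_point (h2 t ht) hzA
        exact ⟨d, fun _ => ⟨hd1', hd2', hd4'⟩⟩
      · exact ⟨A, fun h => absurd h ht⟩
    choose c hc using hctail
    have hcd : ∀ t < L, ∀ s < L, t ≠ s → c t ≠ c s := by
      intro t ht s hs' hts
      obtain ⟨g, hg, hg2, hgs⟩ := pair_one (h2 t ht) (h2 s hs') (h1 t ht s hs' hts)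
      have hgA : g = A := by
        by_contra hh
        have h' := hgs A (fun h'' => hh h''.symm)
        rw [hallA t ht, hallA s hs'] at h'
        nlinarith
      intro hcc
      have h' := hgs (c t) (by rw [hgA]; exact (hc t ht).1)
      rcases mul_eq_zero.mp h' with h'' | h''
      · exact sq_one_ne_zero (hc t ht).2.1 h''
      · rw [hcc] at h''
        exact sq_one_ne_zero (hc s hs').2.1 h''
    exact ⟨A, c, hA2, hallA, fun t ht => hc t ht, hcd⟩


variable {N : ℕ}

lemma dot_sum_right (v : Fin N → ℤ) (s : Finset ℕ) (f : ℕ → Fin N → ℤ) :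
    v ⬝ᵥ (∑ i ∈ s, f i) = ∑ i ∈ s, v ⬝ᵥ f i := by
  simp only [dotProduct, Finset.sum_apply, Finset.mul_sum]
  exact Finset.sum_comm

lemma dot_sum_left (v : Fin N → ℤ) (s : Finset ℕ) (f : ℕ → Fin N → ℤ) :
    (∑ i ∈ s, f i) ⬝ᵥ v = ∑ i ∈ s, f i ⬝ᵥ v := by
  rw [dotProduct_comm, dot_sum_right]
  exact Finset.sum_congr rfl fun i _ => dotProduct_comm _ _

lemma chain_x_dot_z {L : ℕ} {x : ℕ → Fin N → ℤ}
    (hg : ∀ j < L, ∀ j' < L, x j ⬝ᵥ x j' =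
      if j = j' then 2 else if j + 1 = j' ∨ j' + 1 = j then -1 else 0)
    {s : ℕ} (hs : s < L) {j : ℕ} (hj : j ≤ s) :
    x j ⬝ᵥ (∑ j' ∈ Finset.range (s + 1), x j') =
      (if j = 0 then 1 else 0) + (if j = s then 1 else 0) := by
  classical
  rw [dot_sum_right]
  have hterm : ∀ j' ∈ Finset.range (s + 1), x j ⬝ᵥ x j' =
      ((if j' = j then (2:ℤ) else 0) + (if j' = j + 1 then -1 else 0))
        + (if j' + 1 = j then -1 else 0) := by
    intro j' hj'
    have hj'lt : j' < L := by
      have := Finset.mem_range.mp hj'; omega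
    rw [hg j (by omega) j' hj'lt]
    split_ifs <;> omega
  rw [Finset.sum_congr rfl hterm]
  rw [Finset.sum_add_distrib, Finset.sum_add_distrib]
  rw [Finset.sum_ite_eq' (Finset.range (s+1)) j (fun _ => (2:ℤ)),
      Finset.sum_ite_eq' (Finset.range (s+1)) (j+1) (fun _ => (-1:ℤ))]
  have h3 : (∑ j' ∈ Finset.range (s+1), if j' + 1 = j then (-1:ℤ) else 0)
      = if j = 0 then 0 else -1 := by
    rcases Nat.eq_zero_or_pos j with h0 | h0
    · subst h0; simp
    · obtain ⟨m, rfl⟩ := Nat.exists_eq_succ_of_ne_zero (by omega : j ≠ 0)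
      have hcong : (∑ j' ∈ Finset.range (s+1), if j' + 1 = m + 1 then (-1:ℤ) else 0)
          = ∑ j' ∈ Finset.range (s+1), if j' = m then (-1:ℤ) else 0 :=
        Finset.sum_congr rfl fun j' _ => by simp
      rw [hcong, Finset.sum_ite_eq' _ m (fun _ => (-1:ℤ))]
      simp only [Finset.mem_range]
      split_ifs <;> first | omega | simp_all
  rw [h3]
  simp only [Finset.mem_range]
  split_ifs <;> omega

lemma chain_z_gram {L : ℕ} {x : ℕ → Fin N → ℤ}
    (hg : ∀ j < L, ∀ j' < L, x j ⬝ᵥ x j' =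
      if j = j' then 2 else if j + 1 = j' ∨ j' + 1 = j then -1 else 0) :
    ∀ t < L, ∀ s < L,
      (∑ j ∈ Finset.range (t+1), x j) ⬝ᵥ (∑ j ∈ Finset.range (s+1), x j) =
      if t = s then 2 else 1 := by
  have key : ∀ t s, t ≤ s → s < L →
      (∑ j ∈ Finset.range (t+1), x j) ⬝ᵥ (∑ j ∈ Finset.range (s+1), x j) =
      if t = s then 2 else 1 := by
    intro t s hts hs
    rw [dot_sum_left]
    have hterm : ∀ j ∈ Finset.range (t+1),
        x j ⬝ᵥ (∑ j' ∈ Finset.range (s+1), x j') =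
        (if j = 0 then (1:ℤ) else 0) + (if j = s then 1 else 0) := by
      intro j hj
      exact chain_x_dot_z hg hs (by have := Finset.mem_range.mp hj; omega)
    rw [Finset.sum_congr rfl hterm, Finset.sum_add_distrib,
        Finset.sum_ite_eq' _ 0 (fun _ => (1:ℤ)), Finset.sum_ite_eq' _ s (fun _ => (1:ℤ))]
    simp only [Finset.mem_range]
    split_ifs <;> omega
  intro t ht s hs
  rcases le_total t s with h | h
  · exact key t s h hs
  · rw [dotProduct_comm, key s t h ht]
    split_ifs <;> omega


lemma one_le_sq_of_ne {z : ℤ} (h : z ≠ 0) : 1 ≤ z ^ 2 := by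
  rcases h.lt_or_gt with h' | h' <;> nlinarith

lemma beta_mass {β L : ℤ} (hL : 1 ≤ L) : 1 ≤ β ^ 2 + L * (1 + β) ^ 2 := by
  rcases eq_or_ne β 0 with h | h
  · rw [h]; nlinarith
  · nlinarith [one_le_sq_of_ne h, sq_nonneg (1 + β)]

lemma beta_cases {β L : ℤ} (hL : 1 ≤ L) (h : β ^ 2 + L * (1 + β) ^ 2 = 1) :
    β = -1 ∨ (β = 0 ∧ L = 1) := by
  have h1 : 0 ≤ (1 + β) ^ 2 := sq_nonneg _
  have hb2 : β ^ 2 ≤ 1 := by nlinarith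
  have hbound : -1 ≤ β ∧ β ≤ 1 := by constructor <;> nlinarith
  rcases (by omega : β = -1 ∨ β = 0 ∨ β = 1) with h' | h' | h'
  · exact Or.inl h'
  · subst h'
    refine Or.inr ⟨rfl, ?_⟩
    nlinarith
  · exfalso
    subst h'
    nlinarith

lemma sq_eq_one_aux {P s2 Q : ℤ} (h1 : P * s2 ≤ Q) (h2 : 1 ≤ s2)
    (h3 : Q ≤ P) (h4 : 2 ≤ P) : s2 = 1 := by nlinarith

end StmtAux

open StmtAux in
set_option maxHeartbeats 2000000 in
/-- If the intersection lattice `(ℤ^V, G)` of the star-shaped plumbing for the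
pretzel link `P(p_1,…,p_n,-q)` embeds in `-ℤ^N` (via `B` with `Bᵀ B = -G`) with
the map represented by `Bᵀ` surjective, then `q > min{p_1,…,p_n}`. -/
theorem stmt_10 (n : ℕ) (hn : 2 ≤ n) (p : Fin n → ℕ) (hp : ∀ i, 2 ≤ p i)
    (q : ℕ) (hq : 1 ≤ q)
    (V : ℕ) (hV : V = 1 + (∑ i, (p i - 1)) + 1)
    (e : PretzelVertex n p ≃ Fin V)
    (G : Matrix (Fin V) (Fin V) ℤ)
    (hG : ∀ a b : PretzelVertex n p, G (e a) (e b) = pretzelMatrix n p q a b)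
    (hex : ∃ (N : ℕ) (B : Matrix (Fin N) (Fin V) ℤ),
      B.transpose * B = -G ∧
      Function.Surjective (fun x : Fin N → ℤ => B.transpose.mulVec x)) :
    Finset.univ.inf' (Finset.univ_nonempty_iff.mpr ⟨⟨0, by omega⟩⟩) p < q := by
  classical
  by_contra hcon
  push_neg at hcon
  have hQP : ∀ i, q ≤ p i := fun i =>
    le_trans hcon (Finset.inf'_le p (Finset.mem_univ i))
  obtain ⟨N, B, hB, hsB⟩ := hex
  set b : PretzelVertex n p → Fin N → ℤ := fun v k => B k (e v) with hbdef
  have hGram : ∀ v w : PretzelVertex n p,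
      b v ⬝ᵥ b w = -pretzelMatrix n p q v w := by
    intro v w
    have h1 := congrFun (congrFun hB (e v)) (e w)
    rw [Matrix.mul_apply] at h1
    simp only [Matrix.transpose_apply, Matrix.neg_apply] at h1
    rw [hG] at h1
    simpa [hbdef, dotProduct] using h1
  have hsurj : ∀ φ : PretzelVertex n p → ℤ, ∃ y : Fin N → ℤ, ∀ v, b v ⬝ᵥ y = φ v := by
    intro φ
    obtain ⟨y, hy⟩ := hsB (fun w => φ (e.symm w))
    refine ⟨y, fun v => ?_⟩
    have h1 := congrFun hy (e v)
    simp only [Matrix.mulVec, Matrix.transpose_apply, dotProduct,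
      Equiv.symm_apply_apply] at h1 ⊢
    exact h1
  set v0 : Fin N → ℤ := b (Sum.inl ()) with hv0def
  set u : Fin N → ℤ := b (Sum.inr (Sum.inr ())) with hudef
  set X : Fin n → ℕ → Fin N → ℤ :=
    fun i j => if h : j < p i - 1 then b (Sum.inr (Sum.inl ⟨i, ⟨j, h⟩⟩)) else 0 with hXdef
  have hv0v0 : v0 ⬝ᵥ v0 = (n : ℤ) := by
    have := hGram (Sum.inl ()) (Sum.inl ())
    simpa [pretzelMatrix] using this
  have huu : u ⬝ᵥ u = (q : ℤ) := by
    have := hGram (Sum.inr (Sum.inr ())) (Sum.inr (Sum.inr ()))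
    simpa [pretzelMatrix] using this
  have hv0u : v0 ⬝ᵥ u = -1 := by
    have := hGram (Sum.inl ()) (Sum.inr (Sum.inr ()))
    simpa [pretzelMatrix] using this
  have hXX : ∀ i : Fin n, ∀ j < p i - 1, ∀ j' < p i - 1, X i j ⬝ᵥ X i j' =
      if j = j' then 2 else if j + 1 = j' ∨ j' + 1 = j then -1 else 0 := by
    intro i j hj j' hj'
    have h1 := hGram (Sum.inr (Sum.inl ⟨i, ⟨j, hj⟩⟩)) (Sum.inr (Sum.inl ⟨i, ⟨j', hj'⟩⟩))
    simp only [pretzelMatrix, if_pos rfl] at h1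
    rw [hXdef]
    simp only [dif_pos hj, dif_pos hj']
    rw [h1]
    split_ifs <;> norm_num
  have hXXc : ∀ i i' : Fin n, i ≠ i' → ∀ j < p i - 1, ∀ j' < p i' - 1,
      X i j ⬝ᵥ X i' j' = 0 := by
    intro i i' hii j hj j' hj'
    have h1 := hGram (Sum.inr (Sum.inl ⟨i, ⟨j, hj⟩⟩)) (Sum.inr (Sum.inl ⟨i', ⟨j', hj'⟩⟩))
    have hne : ((i : ℕ) = (i' : ℕ)) = False := by
      simp [Fin.val_eq_val, hii]
    simp only [pretzelMatrix, hne, if_false] at h1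
    rw [hXdef]
    simp only [dif_pos hj, dif_pos hj']
    rw [h1]
    norm_num
  have hXv0 : ∀ i : Fin n, ∀ j < p i - 1, X i j ⬝ᵥ v0 =
      if j = 0 then -1 else 0 := by
    intro i j hj
    have h1 := hGram (Sum.inr (Sum.inl ⟨i, ⟨j, hj⟩⟩)) (Sum.inl ())
    simp only [pretzelMatrix] at h1
    rw [hXdef]
    simp only [dif_pos hj]
    rw [hv0def, h1]
    split_ifs <;> norm_num
  have hXu : ∀ i : Fin n, ∀ j < p i - 1, X i j ⬝ᵥ u = 0 := by
    intro i j hj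
    have h1 := hGram (Sum.inr (Sum.inl ⟨i, ⟨j, hj⟩⟩)) (Sum.inr (Sum.inr ()))
    simp only [pretzelMatrix] at h1
    rw [hXdef]
    simp only [dif_pos hj]
    rw [hudef, h1]
    norm_num
  set Z : Fin n → ℕ → Fin N → ℤ :=
    fun i t => ∑ j ∈ Finset.range (t + 1), X i j with hZdef
  have hZZ : ∀ i : Fin n, ∀ t < p i - 1, ∀ s < p i - 1,
      Z i t ⬝ᵥ Z i s = if t = s then 2 else 1 := fun i => chain_z_gram (hXX i)
  have hZ2 : ∀ i : Fin n, ∀ t < p i - 1, Z i t ⬝ᵥ Z i t = 2 := by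
    intro i t ht
    simpa using hZZ i t ht t ht
  have hZ1 : ∀ i : Fin n, ∀ t < p i - 1, ∀ s < p i - 1, t ≠ s →
      Z i t ⬝ᵥ Z i s = 1 := by
    intro i t ht s hs hts
    have := hZZ i t ht s hs
    rwa [if_neg hts] at this
  have hZv0 : ∀ i : Fin n, ∀ t < p i - 1, Z i t ⬝ᵥ v0 = -1 := by
    intro i t ht
    rw [hZdef]
    rw [dot_sum_left]
    rw [Finset.sum_congr rfl (fun j hj => hXv0 i j
      (by have := Finset.mem_range.mp hj; omega))]
    rw [Finset.sum_ite_eq' _ 0 (fun _ => (-1 : ℤ))]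
    simp
  have hZu : ∀ i : Fin n, ∀ t < p i - 1, Z i t ⬝ᵥ u = 0 := by
    intro i t ht
    rw [hZdef, dot_sum_left]
    refine Finset.sum_eq_zero fun j hj => hXu i j
      (by have := Finset.mem_range.mp hj; omega)
  have hZZc : ∀ i i' : Fin n, i ≠ i' → ∀ t < p i - 1, ∀ s < p i' - 1,
      Z i t ⬝ᵥ Z i' s = 0 := by
    intro i i' hii t ht s hs
    rw [hZdef, dot_sum_left]
    refine Finset.sum_eq_zero fun j hj => ?_
    rw [dot_sum_right]
    refine Finset.sum_eq_zero fun j' hj' => hXXc i i' hii j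
      (by have := Finset.mem_range.mp hj; omega) j'
      (by have := Finset.mem_range.mp hj'; omega)
  have hSone : ∀ i₀ : Fin n, ∃ y : Fin N → ℤ,
      ∀ i : Fin n, ∀ t < p i - 1, Z i t ⬝ᵥ y = if i = i₀ then 1 else 0 := by
    intro i₀
    obtain ⟨y, hy⟩ := hsurj (fun v => match v with
      | Sum.inr (Sum.inl s) => if s.1 = i₀ ∧ (s.2 : ℕ) = 0 then 1 else 0
      | _ => 0)
    refine ⟨y, fun i t ht => ?_⟩
    rw [hZdef, dot_sum_left]
    have hterm : ∀ j ∈ Finset.range (t + 1),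
        X i j ⬝ᵥ y = if i = i₀ ∧ j = 0 then 1 else 0 := by
      intro j hj
      have hjL : j < p i - 1 := by have := Finset.mem_range.mp hj; omega
      rw [hXdef]
      simp only [dif_pos hjL]
      rw [hy (Sum.inr (Sum.inl ⟨i, ⟨j, hjL⟩⟩))]
    rw [Finset.sum_congr rfl hterm]
    by_cases hii : i = i₀
    · simp only [hii, true_and]
      rw [Finset.sum_ite_eq' _ 0 (fun _ => (1 : ℤ))]
      simp
    · simp [hii]
  have hStwo : ∃ y : Fin N → ℤ,
      (∀ i : Fin n, ∀ t < p i - 1, Z i t ⬝ᵥ y = 0) ∧ u ⬝ᵥ y = 1 := by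
    obtain ⟨y, hy⟩ := hsurj (fun v => match v with
      | Sum.inr (Sum.inr _) => 1
      | _ => 0)
    refine ⟨y, fun i t ht => ?_, ?_⟩
    · rw [hZdef, dot_sum_left]
      refine Finset.sum_eq_zero fun j hj => ?_
      have hjL : j < p i - 1 := by have := Finset.mem_range.mp hj; omega
      rw [hXdef]
      simp only [dif_pos hjL]
      rw [hy (Sum.inr (Sum.inl ⟨i, ⟨j, hjL⟩⟩))]
    · rw [hudef]
      exact hy (Sum.inr (Sum.inr ()))
  have hLpos : ∀ i : Fin n, 1 ≤ p i - 1 := fun i => by have := hp i; omega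
  have hubAll : ∀ i : Fin n, ∃ (A : Fin N) (c : ℕ → Fin N),
      (Z i 0 A) ^ 2 = 1 ∧
      (∀ t < p i - 1, Z i t A = Z i 0 A) ∧
      (∀ t < p i - 1, c t ≠ A ∧ (Z i t (c t)) ^ 2 = 1 ∧
        (∀ w, w ≠ A → w ≠ c t → Z i t w = 0)) ∧
      (∀ t < p i - 1, ∀ s < p i - 1, t ≠ s → c t ≠ c s) := by
    intro i
    exact hub (hLpos i) (Z i) v0 (hZ2 i) (hZ1 i) (hZv0 i)
  choose A c hσsq hallA hcT hcinj using hubAll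
  set σ : Fin n → ℤ := fun i => Z i 0 (A i) with hσdef
  have hσ2 : ∀ i, σ i ^ 2 = 1 := hσsq
  set T : Fin n → Finset (Fin N) :=
    fun i => insert (A i) ((Finset.range (p i - 1)).image (c i)) with hTdef
  have hmemnz : ∀ i : Fin n, ∀ w ∈ T i, ∃ t, t < p i - 1 ∧ Z i t w ≠ 0 := by
    intro i w hw
    rw [hTdef] at hw
    simp only [Finset.mem_insert, Finset.mem_image, Finset.mem_range] at hw
    rcases hw with rfl | ⟨t, ht, rfl⟩
    · exact ⟨0, hLpos i, sq_one_ne_zero (hσ2 i)⟩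
    · exact ⟨t, ht, sq_one_ne_zero (hcT i t ht).2.1⟩
  have hTdisj : ∀ i i' : Fin n, i ≠ i' → Disjoint (T i) (T i') := by
    intro i i' hii
    rw [Finset.disjoint_left]
    intro w hw hw'
    obtain ⟨t, ht, hz⟩ := hmemnz i w hw
    obtain ⟨t', ht', hz'⟩ := hmemnz i' w hw'
    obtain ⟨y, hy⟩ := hSone i
    have hpz := pair_zero (hZ2 i t ht) (hZ2 i' t' ht')
      (hZZc i i' hii t ht t' ht')
      ⟨y, by rw [hy i t ht]; simp, by
        rw [hy i' t' ht', if_neg (fun h => hii h.symm)]⟩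
    exact (mul_ne_zero hz hz') (hpz w)
  have hnm : ∀ i : Fin n, A i ∉ (Finset.range (p i - 1)).image (c i) := by
    intro i hmem
    simp only [Finset.mem_image, Finset.mem_range] at hmem
    obtain ⟨t, ht, heq⟩ := hmem
    exact (hcT i t ht).1 heq
  have hsumT : ∀ i : Fin n, ∀ f : Fin N → ℤ,
      ∑ w ∈ T i, f w = f (A i) + ∑ t ∈ Finset.range (p i - 1), f (c i t) := by
    intro i f
    rw [hTdef, Finset.sum_insert (hnm i), Finset.sum_image]
    intro t ht s hs heq
    by_contra hne
    exact hcinj i t (Finset.mem_range.mp ht) s (Finset.mem_range.mp hs) hne heq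
  have hdotT : ∀ i : Fin n, ∀ t < p i - 1, ∀ y : Fin N → ℤ,
      Z i t ⬝ᵥ y = σ i * y (A i) + Z i t (c i t) * y (c i t) := by
    intro i t ht y
    obtain ⟨hcne, hcsq', hcsupp⟩ := hcT i t ht
    rw [dot_support y (fun h => hcne h.symm) hcsupp, hallA i t ht]
  set sv : Fin n → ℤ := fun i => σ i * u (A i) with hsvdef
  set bv : Fin n → ℤ := fun i => σ i * v0 (A i) with hbvdef
  have huA : ∀ i, u (A i) = σ i * sv i := by
    intro i
    have h1 : σ i * sv i = σ i ^ 2 * u (A i) := by rw [hsvdef]; ring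
    rw [h1, hσ2 i, one_mul]
  have hv0A : ∀ i, v0 (A i) = σ i * bv i := by
    intro i
    have h1 : σ i * bv i = σ i ^ 2 * v0 (A i) := by rw [hbvdef]; ring
    rw [h1, hσ2 i, one_mul]
  have hucs : ∀ i : Fin n, ∀ t < p i - 1,
      Z i t (c i t) * u (c i t) = -sv i := by
    intro i t ht
    have h1 := hZu i t ht
    rw [hdotT i t ht u] at h1
    simp only [hsvdef]
    linarith
  have hvcs : ∀ i : Fin n, ∀ t < p i - 1,
      Z i t (c i t) * v0 (c i t) = -1 - bv i := by
    intro i t ht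
    have h1 := hZv0 i t ht
    rw [hdotT i t ht v0] at h1
    simp only [hbvdef]
    linarith
  have husq : ∀ i : Fin n, ∀ t < p i - 1, (u (c i t)) ^ 2 = sv i ^ 2 := by
    intro i t ht
    have h3 : (Z i t (c i t)) ^ 2 * (u (c i t)) ^ 2 = sv i ^ 2 := by
      rw [← mul_pow, hucs i t ht]; ring
    rw [(hcT i t ht).2.1, one_mul] at h3
    exact h3
  have hvsq : ∀ i : Fin n, ∀ t < p i - 1, (v0 (c i t)) ^ 2 = (1 + bv i) ^ 2 := by
    intro i t ht
    have h3 : (Z i t (c i t)) ^ 2 * (v0 (c i t)) ^ 2 = (1 + bv i) ^ 2 := by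
      rw [← mul_pow, hvcs i t ht]; ring
    rw [(hcT i t ht).2.1, one_mul] at h3
    exact h3
  -- the amount of v0-square-mass on chain i
  have hmT : ∀ i : Fin n, ∑ w ∈ T i, (v0 w) ^ 2
      = bv i ^ 2 + ((p i - 1 : ℕ) : ℤ) * (1 + bv i) ^ 2 := by
    intro i
    rw [hsumT i (fun w => v0 w ^ 2)]
    have h1 : (v0 (A i)) ^ 2 = bv i ^ 2 := by
      rw [hv0A i, mul_pow, hσ2 i, one_mul]
    rw [h1, Finset.sum_congr rfl (fun t ht => hvsq i t (Finset.mem_range.mp ht)),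
      Finset.sum_const, Finset.card_range, nsmul_eq_mul]
  have hm1 : ∀ i : Fin n, 1 ≤ ∑ w ∈ T i, (v0 w) ^ 2 := by
    intro i
    rw [hmT i]
    have hLi : 1 ≤ ((p i - 1 : ℕ) : ℤ) := by
      have := hp i
      have h2 : 1 ≤ p i - 1 := by omega
      exact_mod_cast h2
    exact beta_mass hLi
  set U : Finset (Fin N) := Finset.univ.biUnion T with hUdef
  have hUsum : ∀ f : Fin N → ℤ,
      ∑ w ∈ U, f w = ∑ i : Fin n, ∑ w ∈ T i, f w := by
    intro f
    rw [hUdef]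
    exact Finset.sum_biUnion (fun i _ i' _ hii => hTdisj i i' hii)
  have hv0sum : ∑ w, (v0 w) ^ 2 = (n : ℤ) := by rw [← dot_as_sq, hv0v0]
  have husum' : ∑ w, (u w) ^ 2 = (q : ℤ) := by rw [← dot_as_sq, huu]
  have hUv0 : ∑ i : Fin n, ∑ w ∈ T i, (v0 w) ^ 2 ≤ (n : ℤ) := by
    rw [← hUsum, ← hv0sum]
    refine Finset.sum_le_sum_of_subset_of_nonneg (Finset.subset_univ U) ?_
    intro w _ _
    exact sq_nonneg _
  have hge : (n : ℤ) ≤ ∑ i : Fin n, ∑ w ∈ T i, (v0 w) ^ 2 := by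
    have h1 := Finset.card_nsmul_le_sum Finset.univ
      (fun i => ∑ w ∈ T i, (v0 w) ^ 2) 1 (fun i _ => hm1 i)
    simpa using h1
  have hEq : ∑ i : Fin n, ∑ w ∈ T i, (v0 w) ^ 2 = (n : ℤ) := le_antisymm hUv0 hge
  have hv0off : ∀ w ∉ U, v0 w = 0 := by
    have hsplit : ∑ w ∈ Finset.univ \ U, (v0 w) ^ 2 + ∑ w ∈ U, (v0 w) ^ 2
        = ∑ w, (v0 w) ^ 2 := Finset.sum_sdiff (Finset.subset_univ U)
    rw [hv0sum, hUsum, hEq] at hsplit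
    have hzero : ∑ w ∈ Finset.univ \ U, (v0 w) ^ 2 = 0 := by linarith
    intro w hw
    have hwmem : w ∈ Finset.univ \ U := by simp [Finset.mem_sdiff, hw]
    have := (Finset.sum_eq_zero_iff_of_nonneg
      (fun i _ => sq_nonneg (v0 i))).mp hzero w hwmem
    exact pow_eq_zero_iff (n := 2) (by norm_num) |>.mp this
  have hmeach : ∀ i : Fin n, ∑ w ∈ T i, (v0 w) ^ 2 = 1 := by
    intro i
    by_contra hne
    have h2le : 2 ≤ ∑ w ∈ T i, (v0 w) ^ 2 := by
      have := hm1 i; omega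
    have herase : ((n : ℤ) - 1) ≤ ∑ j ∈ Finset.univ.erase i,
        ∑ w ∈ T j, (v0 w) ^ 2 := by
      have h1 := Finset.card_nsmul_le_sum (Finset.univ.erase i)
        (fun j => ∑ w ∈ T j, (v0 w) ^ 2) 1 (fun j _ => hm1 j)
      have hcard : (Finset.univ.erase i).card = n - 1 := by
        rw [Finset.card_erase_of_mem (Finset.mem_univ i)]
        simp
      rw [hcard] at h1
      have : ((n - 1 : ℕ) : ℤ) ≤ ∑ j ∈ Finset.univ.erase i,
          ∑ w ∈ T j, (v0 w) ^ 2 := by simpa using h1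
      have hn1 : ((n - 1 : ℕ) : ℤ) = (n : ℤ) - 1 := by
        have : 1 ≤ n := by omega
        omega
      linarith [this, hn1.symm.le, hn1.le]
    have hsum2 : ∑ w ∈ T i, (v0 w) ^ 2 + ∑ j ∈ Finset.univ.erase i,
        ∑ w ∈ T j, (v0 w) ^ 2 = (n : ℤ) := by
      rw [Finset.add_sum_erase _ (fun j => ∑ w ∈ T j, (v0 w) ^ 2)
        (Finset.mem_univ i)]
      exact hEq
    linarith
  have hcontrib : ∀ i : Fin n, (∑ w ∈ T i, v0 w * u w = -sv i) ∨
      (∑ w ∈ T i, v0 w * u w = sv i) := by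
    intro i
    have hcase := hmeach i
    rw [hmT i] at hcase
    have hLi : 1 ≤ ((p i - 1 : ℕ) : ℤ) := by
      have := hp i
      have h2 : 1 ≤ p i - 1 := by omega
      exact_mod_cast h2
    rcases beta_cases hLi hcase with hβ | ⟨hβ, hL1⟩
    · left
      rw [hsumT i (fun w => v0 w * u w)]
      have hc0 : ∀ t ∈ Finset.range (p i - 1),
          v0 (c i t) * u (c i t) = 0 := by
        intro t ht'
        have h1 := hvsq i t (Finset.mem_range.mp ht')
        rw [hβ] at h1
        norm_num at h1
        rw [h1, zero_mul]
      rw [Finset.sum_eq_zero hc0, add_zero, hv0A i, huA i, hβ]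
      linear_combination (-(sv i)) * (hσ2 i)
    · right
      have hL1' : p i - 1 = 1 := by exact_mod_cast hL1
      rw [hsumT i (fun w => v0 w * u w), hL1', Finset.sum_range_one]
      have h0 : 0 < p i - 1 := hLpos i
      have e1 := hvcs i 0 h0
      have e2 := hucs i 0 h0
      have h3 := (hcT i 0 h0).2.1
      rw [hβ] at e1
      norm_num at e1
      have hAz : v0 (A i) * u (A i) = 0 := by
        rw [hv0A i, hβ]
        ring
      rw [hAz, zero_add]
      rcases sq_one_cases h3 with hz | hz
      · rw [hz, one_mul] at e1 e2
        rw [e1, e2]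
        ring
      · rw [hz] at e1 e2
        have e1' : v0 (c i 0) = 1 := by linarith
        have e2' : u (c i 0) = sv i := by linarith
        rw [e1', e2', one_mul]
  have hbusum : ∑ i : Fin n, ∑ w ∈ T i, v0 w * u w = -1 := by
    have h1 : ∑ w, v0 w * u w = -1 := by
      have := hv0u
      simpa [dotProduct] using this
    have hzero : ∑ w ∈ Finset.univ \ U, v0 w * u w = 0 := by
      refine Finset.sum_eq_zero fun w hw => ?_
      rw [hv0off w (Finset.mem_sdiff.mp hw).2, zero_mul]
    have hsplit : ∑ w ∈ Finset.univ \ U, v0 w * u w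
        + ∑ w ∈ U, v0 w * u w = ∑ w, v0 w * u w :=
      Finset.sum_sdiff (Finset.subset_univ U)
    rw [← hUsum (fun w => v0 w * u w)]
    linarith
  have hkex : ∃ k, sv k ≠ 0 := by
    by_contra hall
    push_neg at hall
    have h0 : ∀ i ∈ Finset.univ, ∑ w ∈ T i, v0 w * u w = 0 := by
      intro i _
      rcases hcontrib i with h | h <;> rw [h, hall i] <;> ring
    rw [Finset.sum_eq_zero h0] at hbusum
    norm_num at hbusum
  obtain ⟨k, hk⟩ := hkex
  have hpcast : ((p k - 1 : ℕ) : ℤ) = (p k : ℤ) - 1 := by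
    have := hp k
    omega
  have huTk : ∑ w ∈ T k, (u w) ^ 2 = (p k : ℤ) * sv k ^ 2 := by
    rw [hsumT k (fun w => u w ^ 2)]
    have h1 : u (A k) ^ 2 = sv k ^ 2 := by rw [huA k, mul_pow, hσ2 k, one_mul]
    rw [h1, Finset.sum_congr rfl
      (fun t ht => husq k t (Finset.mem_range.mp ht)),
      Finset.sum_const, Finset.card_range, nsmul_eq_mul, hpcast]
    ring
  have hqsum : (p k : ℤ) * sv k ^ 2 ≤ (q : ℤ) := by
    rw [← husum', ← huTk]
    exact Finset.sum_le_sum_of_subset_of_nonneg (Finset.subset_univ _)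
      (fun w _ _ => sq_nonneg _)
  have hsk2 : 1 ≤ sv k ^ 2 := one_le_sq_of_ne hk
  have hqp : (q : ℤ) ≤ (p k : ℤ) := by exact_mod_cast hQP k
  have hpk2 : (2 : ℤ) ≤ (p k : ℤ) := by exact_mod_cast hp k
  have hskeq : sv k ^ 2 = 1 := sq_eq_one_aux hqsum hsk2 hqp hpk2
  have hTkfull : ∑ w ∈ T k, (u w) ^ 2 = (q : ℤ) := by
    have h1 := hqsum
    rw [hskeq, mul_one] at h1
    rw [huTk, hskeq, mul_one]
    linarith
  have huoff : ∀ w ∉ T k, u w = 0 := by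
    have hsplit : ∑ w ∈ Finset.univ \ T k, u w ^ 2 + ∑ w ∈ T k, u w ^ 2
        = ∑ w, u w ^ 2 := Finset.sum_sdiff (Finset.subset_univ _)
    rw [husum', hTkfull] at hsplit
    have hzero : ∑ w ∈ Finset.univ \ T k, u w ^ 2 = 0 := by linarith
    intro w hw
    have hwmem : w ∈ Finset.univ \ T k := by simp [Finset.mem_sdiff, hw]
    have := (Finset.sum_eq_zero_iff_of_nonneg
      (fun i _ => sq_nonneg (u i))).mp hzero w hwmem
    exact pow_eq_zero_iff (n := 2) (by norm_num) |>.mp this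
  obtain ⟨y, hyZ, hyu⟩ := hStwo
  have h1 : ∑ w, u w * y w = 1 := by simpa [dotProduct] using hyu
  have hzero : ∑ w ∈ Finset.univ \ T k, u w * y w = 0 := by
    refine Finset.sum_eq_zero fun w hw => ?_
    rw [huoff w (Finset.mem_sdiff.mp hw).2, zero_mul]
  have hsplit : ∑ w ∈ Finset.univ \ T k, u w * y w
      + ∑ w ∈ T k, u w * y w = ∑ w, u w * y w :=
    Finset.sum_sdiff (Finset.subset_univ _)
  have h2 : ∑ w ∈ T k, u w * y w = 1 := by linarith
  rw [hsumT k (fun w => u w * y w)] at h2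
  have hterm : ∀ t ∈ Finset.range (p k - 1),
      u (c k t) * y (c k t) = sv k * (σ k * y (A k)) := by
    intro t ht'
    have ht := Finset.mem_range.mp ht'
    have e1 := hucs k t ht
    have e2 : Z k t (c k t) * y (c k t) = -(σ k * y (A k)) := by
      have h3 := hyZ k t ht
      rw [hdotT k t ht y] at h3
      linarith
    have h3 := (hcT k t ht).2.1
    rcases sq_one_cases h3 with hz | hz
    · rw [hz, one_mul] at e1 e2
      rw [e1, e2]
      ring
    · rw [hz] at e1 e2
      have e1' : u (c k t) = sv k := by linarith
      have e2' : y (c k t) = σ k * y (A k) := by linarith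
      rw [e1', e2']
  rw [huA k, Finset.sum_congr rfl hterm, Finset.sum_const,
    Finset.card_range, nsmul_eq_mul, hpcast] at h2
  have hexp : (1 : ℤ) = (p k : ℤ) * (σ k * sv k * y (A k)) := by
    linear_combination (-1 : ℤ) * h2
  have hdvd : (p k : ℤ) ∣ 1 := ⟨σ k * sv k * y (A k), hexp⟩
  have hle := Int.le_of_dvd one_pos hdvd
  linarith
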